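/- Let F_od be the commutative algebra generated by f, g with relation (f+c)g² = P(f) + Q(f)g, where deg P ≤ 3, deg Q ≤ 2, c ∈ ℂ. Then the identity (g_1−g_2)·[(f_1+c)g_1 + (f_2+c)g_2 − ½Q(f_1) − ½Q(f_2)] = (f_1−f_2)·[(P(f_1)−P(f_2))/(f_1−f_2) + (Q(f_1)−Q(f_2))(g_1+g_2)/(2(f_1−f_2)) − g_1 g_2] holds in F_od ⊗ F_od, so the two defining equations for λ_od agree. -/

import Mathlib

open MvPolynomial
open scoped TensorProduct

/-- The defining relation `(f+c)g² − P(f) − Q(f)g` of the algebra `F_od`, in `ℂ[f,g]`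
(variable `X 0` is `f`, variable `X 1` is `g`). -/
noncomputable def odRel (P Q : Polynomial ℂ) (c : ℂ) : MvPolynomial (Fin 2) ℂ :=
  (X 0 + C c) * X 1 ^ 2 - Polynomial.aeval (X 0) P - Polynomial.aeval (X 0) Q * X 1

/-- The commutative algebra `F_od = ℂ[f,g]/((f+c)g² − P(f) − Q(f)g)`. -/
noncomputable abbrev Fod (P Q : Polynomial ℂ) (c : ℂ) : Type :=
  MvPolynomial (Fin 2) ℂ ⧸ Ideal.span {odRel P Q c}

set_option maxHeartbeats 1000000 in
/-- In `F_od ⊗ F_od` the identity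
`(g₁−g₂)·[(f₁+c)g₁+(f₂+c)g₂−½Q(f₁)−½Q(f₂)]
  = (f₁−f₂)·[(P(f₁)−P(f₂))/(f₁−f₂) + (Q(f₁)−Q(f₂))(g₁+g₂)/(2(f₁−f₂)) − g₁g₂]`
holds, where divided differences of polynomials are interpreted as polynomials in
`f₁, f₂`; so the two defining equations for `λ_od` agree. -/
theorem stmt_7 (P Q : Polynomial ℂ) (c : ℂ) (hP : P.degree ≤ 3) (hQ : Q.degree ≤ 2)
    (δP δQ : MvPolynomial (Fin 2) ℂ)
    (hδP : (X 0 - X 1) * δP =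
      Polynomial.aeval (X (0 : Fin 2) : MvPolynomial (Fin 2) ℂ) P - Polynomial.aeval (X 1) P)
    (hδQ : (X 0 - X 1) * δQ =
      Polynomial.aeval (X (0 : Fin 2) : MvPolynomial (Fin 2) ℂ) Q - Polynomial.aeval (X 1) Q) :
    let f : Fod P Q c := Ideal.Quotient.mk _ (X 0)
    let g : Fod P Q c := Ideal.Quotient.mk _ (X 1)
    let f₁ : Fod P Q c ⊗[ℂ] Fod P Q c := f ⊗ₜ 1
    let f₂ : Fod P Q c ⊗[ℂ] Fod P Q c := 1 ⊗ₜ f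
    let g₁ : Fod P Q c ⊗[ℂ] Fod P Q c := g ⊗ₜ 1
    let g₂ : Fod P Q c ⊗[ℂ] Fod P Q c := 1 ⊗ₜ g
    (g₁ - g₂) *
        ((f₁ + @algebraMap ℂ (Fod P Q c ⊗[ℂ] Fod P Q c) _ Algebra.TensorProduct.instSemiring _ c) * g₁ + (f₂ + @algebraMap ℂ (Fod P Q c ⊗[ℂ] Fod P Q c) _ Algebra.TensorProduct.instSemiring _ c) * g₂
          - ((1 : ℂ)/2) • Polynomial.aeval f₁ Q - ((1 : ℂ)/2) • Polynomial.aeval f₂ Q)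
      = (f₁ - f₂) *
        (MvPolynomial.aeval ![f₁, f₂] δP +
          ((1 : ℂ)/2) • (MvPolynomial.aeval ![f₁, f₂] δQ * (g₁ + g₂)) - g₁ * g₂) := by
  intro f g f₁ f₂ g₁ g₂
  set I := Ideal.span {odRel P Q c} with hI
  set π : MvPolynomial (Fin 2) ℂ →ₐ[ℂ] Fod P Q c := Ideal.Quotient.mkₐ ℂ I with hπ
  have hrel0 : π (odRel P Q c) = 0 := by
    rw [hπ, Ideal.Quotient.mkₐ_eq_mk]
    exact (Ideal.Quotient.eq_zero_iff_mem).2 (Ideal.subset_span rfl)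
  have hπf : π (X 0) = f := rfl
  have hπg : π (X 1) = g := rfl
  have hC : π (C c) = algebraMap ℂ (Fod P Q c) c := by
    rw [show (C c : MvPolynomial (Fin 2) ℂ) = algebraMap ℂ _ c from rfl]
    exact π.commutes c
  have hrel : (f + algebraMap ℂ _ c) * g ^ 2
      = Polynomial.aeval f P + Polynomial.aeval f Q * g := by
    have hrel0 : π ((X 0 + C c) * X 1 ^ 2 - Polynomial.aeval (X 0) P
        - Polynomial.aeval (X 0) Q * X 1) = 0 := hrel0
    rw [map_sub, map_sub, map_mul, map_mul, map_add, map_pow, hC, hπf, hπg,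
      ← Polynomial.aeval_algHom_apply, ← Polynomial.aeval_algHom_apply, hπf,
      sub_sub, sub_eq_zero] at hrel0
    exact hrel0
  -- push the relation to both tensor factors
  have hrel₁ : (f₁ + @algebraMap ℂ (Fod P Q c ⊗[ℂ] Fod P Q c) _ Algebra.TensorProduct.instSemiring _ c) * g₁ ^ 2
      = Polynomial.aeval f₁ P + Polynomial.aeval f₁ Q * g₁ := by
    set φ : @AlgHom ℂ (Fod P Q c) (Fod P Q c ⊗[ℂ] Fod P Q c) _ _ Algebra.TensorProduct.instSemiring _ _ :=
      Algebra.TensorProduct.includeLeft with hφ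
    have hφf : φ f = f₁ := rfl
    have hφg : φ g = g₁ := rfl
    have h := congrArg φ hrel
    rw [map_mul, map_add, pow_two, map_mul, map_add, map_mul, AlgHom.commutes, hφf, hφg,
      ← Polynomial.aeval_algHom_apply, ← Polynomial.aeval_algHom_apply, hφf] at h
    rw [pow_two]; exact h
  have hrel₂ : (f₂ + @algebraMap ℂ (Fod P Q c ⊗[ℂ] Fod P Q c) _ Algebra.TensorProduct.instSemiring _ c) * g₂ ^ 2
      = Polynomial.aeval f₂ P + Polynomial.aeval f₂ Q * g₂ := by
    set φ : @AlgHom ℂ (Fod P Q c) (Fod P Q c ⊗[ℂ] Fod P Q c) _ _ Algebra.TensorProduct.instSemiring _ _ :=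
      Algebra.TensorProduct.includeRight with hφ
    have hφf : φ f = f₂ := rfl
    have hφg : φ g = g₂ := rfl
    have h := congrArg φ hrel
    rw [map_mul, map_add, pow_two, map_mul, map_add, map_mul, AlgHom.commutes, hφf, hφg,
      ← Polynomial.aeval_algHom_apply, ← Polynomial.aeval_algHom_apply, hφf] at h
    rw [pow_two]; exact h
  -- the divided-difference identities in the tensor product
  set ψ : MvPolynomial (Fin 2) ℂ →ₐ[ℂ] Fod P Q c ⊗[ℂ] Fod P Q c :=
    MvPolynomial.aeval ![f₁, f₂] with hψ
  have hψ0 : ψ (X 0) = f₁ := by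
    rw [hψ, MvPolynomial.aeval_X]; rfl
  have hψ1 : ψ (X 1) = f₂ := by
    rw [hψ, MvPolynomial.aeval_X]; rfl
  have hdP : (f₁ - f₂) * MvPolynomial.aeval ![f₁, f₂] δP
      = Polynomial.aeval f₁ P - Polynomial.aeval f₂ P := by
    have h := congrArg ψ hδP
    rw [map_mul, map_sub, map_sub, hψ0, hψ1,
      ← Polynomial.aeval_algHom_apply, ← Polynomial.aeval_algHom_apply, hψ0, hψ1] at h
    exact h
  have hdQ : (f₁ - f₂) * MvPolynomial.aeval ![f₁, f₂] δQ
      = Polynomial.aeval f₁ Q - Polynomial.aeval f₂ Q := by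
    have h := congrArg ψ hδQ
    rw [map_mul, map_sub, map_sub, hψ0, hψ1,
      ← Polynomial.aeval_algHom_apply, ← Polynomial.aeval_algHom_apply, hψ0, hψ1] at h
    exact h
  clear_value f g f₁ f₂ g₁ g₂
  have hs : ∀ x : Fod P Q c ⊗[ℂ] Fod P Q c, ((1 : ℂ)/2) • x + ((1 : ℂ)/2) • x = x := by
    intro x
    rw [← add_smul]
    norm_num
  have h2 : ∀ x y : Fod P Q c ⊗[ℂ] Fod P Q c, x + x = y + y → x = y := by
    intro x y h
    have h' := congrArg (fun z : Fod P Q c ⊗[ℂ] Fod P Q c => ((1 : ℂ)/2) • z) h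
    simp only [smul_add] at h'
    rwa [hs, hs] at h'
  refine h2 _ _ ?_
  linear_combination 2 * hrel₁ - 2 * hrel₂ - 2 * hdP - (g₁ + g₂) * hdQ -
    (g₁ - g₂) * (hs (Polynomial.aeval f₁ Q) + hs (Polynomial.aeval f₂ Q)) +
    (f₂ - f₁) * hs (MvPolynomial.aeval ![f₁, f₂] δQ * (g₁ + g₂))
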